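/- Let b, x > 0 and a, a' ∈ ℂ with a ≠ a'. Then (a'-a)·∫₀ˣ t^{b-1}e^{-t}M(a,b,t)M(a',b,t)dt = x^b e^{-x}·(M(a,b,x)·∂ₓM(a',b,x) - M(a',b,x)·∂ₓM(a,b,x)). -/

import Mathlib

open Filter FormalMultilinearSeries


/-- The Kummer confluent hypergeometric function `M(a,b,x)`, complex first
parameter, real `b` and `x`. -/
noncomputable def kummerM (a : ℂ) (b x : ℝ) : ℂ :=
  ∑' n : ℕ, (ascPochhammer ℂ n).eval a /
    ((ascPochhammer ℂ n).eval (b : ℂ) * (n.factorial : ℂ)) * (x : ℂ) ^ n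

noncomputable def kc (a : ℂ) (b : ℝ) (n : ℕ) : ℂ :=
  (ascPochhammer ℂ n).eval a / ((ascPochhammer ℂ n).eval (b : ℂ) * (n.factorial : ℂ))

lemma pochb_ne {b : ℝ} (hb : 0 < b) (n : ℕ) : (ascPochhammer ℂ n).eval (b : ℂ) ≠ 0 := by
  induction n with
  | zero => simp
  | succ n ih =>
    rw [ascPochhammer_succ_eval]
    refine mul_ne_zero ih ?_
    have : ((b : ℂ) + n) = ((b + n : ℝ) : ℂ) := by push_cast; ring
    rw [this]
    exact_mod_cast ne_of_gt (by positivity : (0:ℝ) < b + n)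

lemma kc_succ {b : ℝ} (hb : 0 < b) (a : ℂ) (n : ℕ) :
    kc a b (n + 1) = kc a b n * (a + n) / (((b:ℂ) + n) * (n + 1)) := by
  have h1 := pochb_ne hb n
  have h2 : ((b:ℂ) + n) ≠ 0 := by
    have : ((b : ℂ) + n) = ((b + n : ℝ) : ℂ) := by push_cast; ring
    rw [this]; exact_mod_cast ne_of_gt (by positivity : (0:ℝ) < b + n)
  have h3 : ((n.factorial : ℂ)) ≠ 0 := by exact_mod_cast n.factorial_ne_zero
  have h4 : ((n:ℂ) + 1) ≠ 0 := Nat.cast_add_one_ne_zero n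
  simp only [kc, ascPochhammer_succ_eval, Nat.factorial_succ, Nat.cast_mul]
  push_cast
  field_simp
  try ring
  try tauto

lemma poch_left (a : ℂ) (n : ℕ) :
    (ascPochhammer ℂ (n+1)).eval a = a * (ascPochhammer ℂ n).eval (a+1) := by
  induction n with
  | zero => simp
  | succ n ih =>
    rw [ascPochhammer_succ_eval, ih, ascPochhammer_succ_eval]
    push_cast
    ring

lemma kc_shift {b : ℝ} (hb : 0 < b) (a : ℂ) (n : ℕ) :
    ((n:ℂ) + 1) * kc a b (n + 1) = (a / b) * kc (a + 1) (b + 1) n := by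
  have hb1 : (0:ℝ) < b + 1 := by linarith
  have h1 := pochb_ne hb1 n
  have h1' : (ascPochhammer ℂ n).eval ((b:ℂ) + 1) ≠ 0 := by
    have : ((b:ℂ) + 1) = (((b + 1 : ℝ)) : ℂ) := by push_cast; ring
    rw [this]; exact h1
  have h3 : ((n.factorial : ℂ)) ≠ 0 := by exact_mod_cast n.factorial_ne_zero
  have h4 : ((n:ℂ) + 1) ≠ 0 := Nat.cast_add_one_ne_zero n
  have hbne : (b : ℂ) ≠ 0 := by exact_mod_cast ne_of_gt hb
  simp only [kc, poch_left, Nat.factorial_succ, Nat.cast_mul]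
  have : (((b + 1 : ℝ)) : ℂ) = (b:ℂ) + 1 := by push_cast; ring
  rw [this]
  push_cast
  field_simp

lemma kc_norm_succ {b : ℝ} (hb : 0 < b) (a : ℂ) (n : ℕ) :
    ‖kc a b (n+1)‖ = ‖kc a b n‖ * (‖a + n‖ / ((b + n) * (n + 1))) := by
  rw [kc_succ hb a n]
  have hbn : (0:ℝ) < b + n := by positivity
  have : ‖((b:ℂ) + n) * ((n:ℂ) + 1)‖ = (b + n) * (n + 1) := by
    rw [norm_mul]
    congr 1
    · have : ((b : ℂ) + n) = ((b + n : ℝ) : ℂ) := by push_cast; ring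
      rw [this, Complex.norm_real, Real.norm_of_nonneg hbn.le]
    · have : ((n : ℂ) + 1) = (((n + 1 : ℝ)) : ℂ) := by push_cast; ring
      rw [this, Complex.norm_real, Real.norm_of_nonneg (by positivity)]
  rw [norm_div, norm_mul, this, mul_div_assoc]

lemma kc_summable {b : ℝ} (hb : 0 < b) (a : ℂ) (r : ℝ) (hr : 0 ≤ r) :
    Summable fun n => ‖kc a b n‖ * r ^ n := by
  have htend : Filter.Tendsto (fun n : ℕ => (‖a + n‖ / ((b + n) * (n + 1))) * r)
      atTop (nhds 0) := by
    refine squeeze_zero (g := fun n : ℕ => ((‖a‖ / b + 1) * r) * (1 / (n + 1)))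
      (fun n => by positivity) (fun n => ?_) ?_
    · have h1 : ‖a + (n:ℂ)‖ ≤ ‖a‖ + n := by
        calc ‖a + (n:ℂ)‖ ≤ ‖a‖ + ‖(n:ℂ)‖ := norm_add_le _ _
        _ = ‖a‖ + n := by simp
      have hbn : (0:ℝ) < b + n := by positivity
      have h2 : (‖a‖ + n) ≤ (‖a‖ / b + 1) * (b + n) := by
        have h0 : (0:ℝ) ≤ ‖a‖ / b := by positivity
        have hA : (‖a‖ / b) * b = ‖a‖ := div_mul_cancel₀ _ (ne_of_gt hb)
        have hn0 : (0:ℝ) ≤ (n:ℝ) := Nat.cast_nonneg n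
        nlinarith
      calc ‖a + (n:ℂ)‖ / ((b + n) * (n + 1)) * r
          ≤ ((‖a‖ / b + 1) * (b + n)) / ((b + n) * (n + 1)) * r := by
            gcongr
            exact h1.trans h2
        _ = ((‖a‖ / b + 1) * r) * (1 / (n + 1)) := by
            rw [mul_comm (‖a‖ / b + 1) (b + n), mul_div_mul_left _ _ (ne_of_gt hbn)]
            ring
    · have : Filter.Tendsto (fun n : ℕ => 1 / ((n:ℝ) + 1)) atTop (nhds 0) :=
        tendsto_one_div_add_atTop_nhds_zero_nat
      simpa using (this.const_mul ((‖a‖ / b + 1) * r))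
  have hev : ∀ᶠ n in atTop, ‖‖kc a b (n+1)‖ * r ^ (n+1)‖ ≤ (1/2) * ‖‖kc a b n‖ * r ^ n‖ := by
    filter_upwards [htend.eventually_le_const (by norm_num : (0:ℝ) < 1/2)] with n hn
    rw [Real.norm_of_nonneg (by positivity), Real.norm_of_nonneg (by positivity),
      kc_norm_succ hb, pow_succ]
    calc ‖kc a b n‖ * (‖a + n‖ / ((b + n) * (n + 1))) * (r ^ n * r)
        = (‖a + n‖ / ((b + n) * (n + 1)) * r) * (‖kc a b n‖ * r ^ n) := by ring
      _ ≤ (1/2) * (‖kc a b n‖ * r ^ n) := by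
          apply mul_le_mul_of_nonneg_right hn (by positivity)
  exact summable_of_ratio_norm_eventually_le (by norm_num) hev

lemma kc_radius_top {b : ℝ} (hb : 0 < b) (a : ℂ) :
    (FormalMultilinearSeries.ofScalars ℂ (kc a b)).radius = ⊤ := by
  apply FormalMultilinearSeries.radius_eq_top_of_summable_norm
  intro r
  have := kc_summable hb a r r.coe_nonneg
  refine this.congr fun n => ?_
  rw [FormalMultilinearSeries.ofScalars_norm]

noncomputable def Fk (a : ℂ) (b : ℝ) : ℂ → ℂ :=
  (FormalMultilinearSeries.ofScalars ℂ (kc a b)).sum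

lemma hasFP {b : ℝ} (hb : 0 < b) (a : ℂ) :
    HasFPowerSeriesOnBall (Fk a b) (FormalMultilinearSeries.ofScalars ℂ (kc a b)) 0 ⊤ := by
  have h := (FormalMultilinearSeries.ofScalars ℂ (kc a b)).hasFPowerSeriesOnBall
    (by rw [kc_radius_top hb a]; exact ENNReal.zero_lt_top)
  rwa [kc_radius_top hb a] at h

lemma hasSum_Fk {b : ℝ} (hb : 0 < b) (a : ℂ) (z : ℂ) :
    HasSum (fun n => kc a b n * z ^ n) (Fk a b z) := by
  have h := (hasFP hb a).hasSum (y := z) (by simp)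
  simp only [FormalMultilinearSeries.ofScalars_apply_eq, smul_eq_mul, zero_add] at h
  exact h

lemma kummerM_eq_Fk {b : ℝ} (hb : 0 < b) (a : ℂ) (t : ℝ) :
    kummerM a b t = Fk a b t := by
  rw [kummerM, ← (hasSum_Fk hb a t).tsum_eq]
  exact tsum_congr fun n => by rw [kc]

lemma Fk_diff {b : ℝ} (hb : 0 < b) (a : ℂ) : Differentiable ℂ (Fk a b) := fun z =>
  ((hasFP hb a).analyticOnNhd z (by simp)).differentiableAt

lemma hasSum_deriv_Fk {b : ℝ} (hb : 0 < b) (a : ℂ) {z : ℂ} (hz : z ≠ 0) :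
    HasSum (fun n : ℕ => ((n : ℂ) + 1) * kc a b (n + 1 : ℕ) * z ^ n) (deriv (Fk a b) z) := by
  have hW : HasFPowerSeriesWithinOnBall (Fk a b)
      (FormalMultilinearSeries.ofScalars ℂ (kc a b)) Set.univ 0 ⊤ :=
    hasFPowerSeriesWithinOnBall_univ.2 (hasFP hb a)
  have hd : HasFDerivWithinAt (Fk a b) (fderiv ℂ (Fk a b) z)
      (insert 0 Set.univ) (0 + z) := by
    rw [zero_add]
    exact ((Fk_diff hb a z).hasFDerivAt).hasFDerivWithinAt
  have hs := hW.hasSum_derivSeries_of_hasFDerivWithinAt (by simp) (by simp) hd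
    (by simpa using uniqueDiffOn_univ)
  have hs2 := hs.mapL (ContinuousLinearMap.apply ℂ ℂ z)
  simp only [ContinuousLinearMap.apply_apply] at hs2
  have heq : ∀ n : ℕ, (FormalMultilinearSeries.ofScalars ℂ (kc a b)).derivSeries n
      (fun _ => z) z = ((n : ℂ) + 1) * kc a b (n + 1 : ℕ) * z ^ (n + 1 : ℕ) := by
    intro n
    rw [FormalMultilinearSeries.derivSeries_apply_diag,
      FormalMultilinearSeries.ofScalars_apply_eq]
    push_cast [nsmul_eq_mul, smul_eq_mul]
    ring
  rw [show fderiv ℂ (Fk a b) z z = z * deriv (Fk a b) z from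
    by rw [← toSpanSingleton_deriv]; simp [smul_eq_mul]] at hs2
  simp only [heq] at hs2
  have hs4 := hs2.div_const z
  have hfun : (fun n : ℕ => ((n : ℂ) + 1) * kc a b (n + 1 : ℕ) * z ^ (n + 1 : ℕ) / z)
      = fun n : ℕ => ((n : ℂ) + 1) * kc a b (n + 1 : ℕ) * z ^ n := by
    funext n
    rw [pow_succ]
    field_simp
    try ring
  have hval : z * deriv (Fk a b) z / z = deriv (Fk a b) z := by
    field_simp
  rw [hfun, hval] at hs4
  exact hs4

lemma kc_rec {b : ℝ} (hb : 0 < b) (a : ℂ) (n : ℕ) :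
    kc a b (n + 1 : ℕ) * (((b:ℂ) + n) * ((n:ℂ) + 1)) = kc a b n * (a + n) := by
  rw [kc_succ hb a n]
  have h2 : ((b:ℂ) + n) ≠ 0 := by
    have : ((b : ℂ) + n) = ((b + n : ℝ) : ℂ) := by push_cast; ring
    rw [this]; exact_mod_cast ne_of_gt (by positivity : (0:ℝ) < b + n)
  have h4 : ((n:ℂ) + 1) ≠ 0 := Nat.cast_add_one_ne_zero n
  field_simp

lemma deriv_Fk_eq {b : ℝ} (hb : 0 < b) (a : ℂ) {z : ℂ} (hz : z ≠ 0) :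
    deriv (Fk a b) z = (a / b) * Fk (a + 1) (b + 1) z := by
  have h1 := hasSum_deriv_Fk hb a hz
  have h2 := (hasSum_Fk (b := b + 1) (by linarith) (a + 1) z).mul_left (a / b)
  refine h1.unique (h2.congr_fun fun n => ?_)
  rw [kc_shift hb a n]
  ring

lemma hasSum_deriv2_Fk {b : ℝ} (hb : 0 < b) (a : ℂ) {z : ℂ} (hz : z ≠ 0) :
    HasSum (fun n : ℕ => ((n:ℂ) + 1) * ((n:ℂ) + 2) * kc a b (n + 2 : ℕ) * z ^ n)
      (deriv (deriv (Fk a b)) z) := by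
  have hev : deriv (Fk a b) =ᶠ[nhds z] fun w => (a / b) * Fk (a + 1) (b + 1) w := by
    filter_upwards [isOpen_compl_singleton.mem_nhds (by simpa using hz)] with w hw
    exact deriv_Fk_eq hb a (by simpa using hw)
  rw [hev.deriv_eq, deriv_const_mul _ (Fk_diff (by linarith : (0:ℝ) < b + 1) (a + 1) z)]
  have h := (hasSum_deriv_Fk (b := b + 1) (by linarith) (a + 1) hz).mul_left (a / b)
  refine h.congr_fun fun n => ?_
  have hsh := kc_shift hb a (n + 1)
  push_cast at hsh
  linear_combination ((n:ℂ) + 1) * z ^ n * hsh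

lemma hasSum_shift {g : ℕ → ℂ} {S : ℂ} (h : HasSum (fun n => g (n + 1)) S)
    (h0 : g 0 = 0) : HasSum g S := by
  refine (hasSum_nat_add_iff' 1).mp ?_
  simpa [h0] using h

lemma Fk_ode {b : ℝ} (hb : 0 < b) (a : ℂ) {z : ℂ} (hz : z ≠ 0) :
    z * deriv (deriv (Fk a b)) z + ((b:ℂ) - z) * deriv (Fk a b) z - a * Fk a b z = 0 := by
  have h0 := (hasSum_Fk hb a z).mul_left a
  have h1 := hasSum_deriv_Fk hb a hz
  have h2 := hasSum_deriv2_Fk hb a hz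
  have hzf'' : HasSum (fun n : ℕ => ((n:ℂ)) * ((n:ℂ) + 1) * kc a b (n + 1 : ℕ) * z ^ n)
      (z * deriv (deriv (Fk a b)) z) := by
    refine hasSum_shift ((h2.mul_left z).congr_fun fun n => ?_) (by simp)
    push_cast
    ring
  have hzf' : HasSum (fun n : ℕ => ((n:ℂ)) * kc a b n * z ^ n)
      (z * deriv (Fk a b) z) := by
    refine hasSum_shift ((h1.mul_left z).congr_fun fun n => ?_) (by simp)
    push_cast
    ring
  have hbf' := h1.mul_left (b:ℂ)
  have hcomb := (hzf''.add hbf').sub (hzf'.add h0)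
  have hzero : (fun n : ℕ => ((n:ℂ)) * ((n:ℂ) + 1) * kc a b (n + 1 : ℕ) * z ^ n
      + (b:ℂ) * (((n:ℂ) + 1) * kc a b (n + 1 : ℕ) * z ^ n)
      - (((n:ℂ)) * kc a b n * z ^ n + a * (kc a b n * z ^ n))) = fun _ => 0 := by
    funext n
    have hr := kc_rec hb a n
    linear_combination z ^ n * hr
  rw [hzero] at hcomb
  have := hasSum_zero.unique hcomb
  linear_combination -this

lemma Fk_deriv_diff {b : ℝ} (hb : 0 < b) (a : ℂ) : Differentiable ℂ (deriv (Fk a b)) := by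
  have h : AnalyticOnNhd ℂ (Fk a b) Set.univ := by
    have := (hasFP hb a).analyticOnNhd
    simpa using this
  exact fun z => ((h.deriv) z trivial).differentiableAt

lemma kummerM_hasDerivAt {b : ℝ} (hb : 0 < b) (a : ℂ) (t : ℝ) :
    HasDerivAt (fun t' : ℝ => kummerM a b t') (deriv (Fk a b) (t:ℂ)) t := by
  have h : HasDerivAt (Fk a b) (deriv (Fk a b) (t:ℂ)) (t:ℂ) :=
    (Fk_diff hb a (t:ℂ)).hasDerivAt
  have h2 := h.comp_ofReal
  refine h2.congr_of_eventuallyEq (Filter.Eventually.of_forall fun s => ?_)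
  exact kummerM_eq_Fk hb a s

lemma dFk_hasDerivAt {b : ℝ} (hb : 0 < b) (a : ℂ) (t : ℝ) :
    HasDerivAt (fun t' : ℝ => deriv (Fk a b) (t':ℂ))
      (deriv (deriv (Fk a b)) (t:ℂ)) t :=
  ((Fk_deriv_diff hb a (t:ℂ)).hasDerivAt).comp_ofReal

lemma cpow_hasDerivAt {b : ℝ} (hb : 0 < b) {t : ℝ} (ht : t ≠ 0) :
    HasDerivAt (fun t' : ℝ => (t':ℂ) ^ (b:ℂ)) ((b:ℂ) * (t:ℂ) ^ ((b:ℂ) - 1)) t := by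
  have hbne : (b:ℂ) ≠ 0 := by exact_mod_cast ne_of_gt hb
  have hr : ((b:ℂ) - 1) ≠ -1 := by
    intro h
    apply hbne
    linear_combination h
  have h := (hasDerivAt_ofReal_cpow_const' ht hr).const_mul (b:ℂ)
  have hfun : (fun y : ℝ => (b:ℂ) * ((y:ℂ) ^ ((b:ℂ) - 1 + 1) / ((b:ℂ) - 1 + 1)))
      = fun y : ℝ => (y:ℂ) ^ (b:ℂ) := by
    funext y
    rw [sub_add_cancel, mul_div_cancel₀ _ hbne]
  rw [hfun] at h
  exact h

lemma exp_neg_hasDerivAt (t : ℝ) :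
    HasDerivAt (fun t' : ℝ => Complex.exp (-(t':ℂ)))
      (-Complex.exp (-(t:ℂ))) t := by
  have h : HasDerivAt (fun z : ℂ => Complex.exp (-z)) (-Complex.exp (-(t:ℂ))) (t:ℂ) := by
    have := (hasDerivAt_neg (t:ℂ)).cexp
    simpa using this
  exact h.comp_ofReal

noncomputable def Wr (a a' : ℂ) (b : ℝ) (t : ℝ) : ℂ :=
  (t:ℂ) ^ (b:ℂ) * Complex.exp (-(t:ℂ)) *
    (Fk a b t * deriv (Fk a' b) t - Fk a' b t * deriv (Fk a b) t)

lemma Wr_hasDerivAt {b : ℝ} (hb : 0 < b) (a a' : ℂ) {t : ℝ} (ht : 0 < t) :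
    HasDerivAt (Wr a a' b)
      ((a' - a) * ((t:ℂ) ^ ((b:ℂ) - 1) * Complex.exp (-(t:ℂ)) * Fk a b t * Fk a' b t)) t := by
  have hT : (t:ℂ) ≠ 0 := by exact_mod_cast ne_of_gt ht
  have hf : HasDerivAt (fun t' : ℝ => Fk a b t') (deriv (Fk a b) (t:ℂ)) t :=
    ((Fk_diff hb a (t:ℂ)).hasDerivAt).comp_ofReal
  have hg : HasDerivAt (fun t' : ℝ => Fk a' b t') (deriv (Fk a' b) (t:ℂ)) t :=
    ((Fk_diff hb a' (t:ℂ)).hasDerivAt).comp_ofReal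
  have hf' := dFk_hasDerivAt hb a t
  have hg' := dFk_hasDerivAt hb a' t
  have hw := (hf.mul hg').sub (hg.mul hf')
  have hPE := (cpow_hasDerivAt hb ht.ne').mul (exp_neg_hasDerivAt t)
  have hW := hPE.mul hw
  have hfun : Wr a a' b = fun t' : ℝ => ((t':ℂ) ^ (b:ℂ) * Complex.exp (-(t':ℂ))) *
      ((fun s : ℝ => Fk a b s) t' * (fun s : ℝ => deriv (Fk a' b) (s:ℂ)) t' -
       (fun s : ℝ => Fk a' b s) t' * (fun s : ℝ => deriv (Fk a b) (s:ℂ)) t') := by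
    funext s
    simp [Wr]
  rw [hfun]
  refine hW.congr_deriv ?_
  symm
  simp only [Pi.mul_apply, Pi.sub_apply]
  have hpow : (t:ℂ) ^ (b:ℂ) = (t:ℂ) ^ ((b:ℂ) - 1) * (t:ℂ) := by
    conv_lhs => rw [show (b:ℂ) = ((b:ℂ) - 1) + 1 by ring]
    rw [Complex.cpow_add _ _ hT, Complex.cpow_one]
  have odeA := Fk_ode hb a hT
  have odeA' := Fk_ode hb a' hT
  rw [hpow]
  set c := (t:ℂ) ^ ((b:ℂ) - 1)
  set E := Complex.exp (-(t:ℂ))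
  linear_combination (c * E * Fk a' b (t:ℂ)) * odeA - (c * E * Fk a b (t:ℂ)) * odeA'

lemma Wr_continuous {b : ℝ} (hb : 0 < b) (a a' : ℂ) : Continuous (Wr a a' b) := by
  have h1 : Continuous fun t : ℝ => (t:ℂ) ^ (b:ℂ) :=
    Complex.continuous_ofReal_cpow_const (by simpa using hb)
  have h2 : Continuous fun t : ℝ => Complex.exp (-(t:ℂ)) :=
    Complex.continuous_exp.comp (Complex.continuous_ofReal.neg)
  have hf : Continuous fun t : ℝ => Fk a b (t:ℂ) :=
    (Fk_diff hb a).continuous.comp Complex.continuous_ofReal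
  have hg : Continuous fun t : ℝ => Fk a' b (t:ℂ) :=
    (Fk_diff hb a').continuous.comp Complex.continuous_ofReal
  have hf' : Continuous fun t : ℝ => deriv (Fk a b) (t:ℂ) :=
    (Fk_deriv_diff hb a).continuous.comp Complex.continuous_ofReal
  have hg' : Continuous fun t : ℝ => deriv (Fk a' b) (t:ℂ) :=
    (Fk_deriv_diff hb a').continuous.comp Complex.continuous_ofReal
  exact (h1.mul h2).mul ((hf.mul hg').sub (hg.mul hf'))

lemma Wr_zero {b : ℝ} (hb : 0 < b) (a a' : ℂ) : Wr a a' b 0 = 0 := by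
  have hbne : (b:ℂ) ≠ 0 := by exact_mod_cast ne_of_gt hb
  simp only [Wr, Complex.ofReal_zero, Complex.zero_cpow hbne, zero_mul]

/-- For `b, x > 0` and `a ≠ a'` in `ℂ`:
`(a'-a) ∫₀ˣ t^{b-1} e^{-t} M(a,b,t) M(a',b,t) dt
  = x^b e^{-x} (M(a,b,x) ∂ₓM(a',b,x) - M(a',b,x) ∂ₓM(a,b,x))`. -/
theorem kummerM_integral_identity (b x : ℝ) (hb : 0 < b) (hx : 0 < x)
    (a a' : ℂ) (haa' : a ≠ a') :
    (a' - a) * ∫ t in (0 : ℝ)..x,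
        (t : ℂ) ^ ((b : ℂ) - 1) * Real.exp (-t) * kummerM a b t * kummerM a' b t =
      (x : ℂ) ^ (b : ℂ) * Real.exp (-x) *
        (kummerM a b x * deriv (fun x' : ℝ => kummerM a' b x') x -
         kummerM a' b x * deriv (fun x' : ℝ => kummerM a b x') x) := by
  set h : ℝ → ℂ := fun t =>
    (t : ℂ) ^ ((b : ℂ) - 1) * Real.exp (-t) * kummerM a b t * kummerM a' b t with hh
  have hint : IntervalIntegrable h MeasureTheory.volume 0 x := by
    have hcpow : IntervalIntegrable (fun t : ℝ => (t:ℂ) ^ ((b:ℂ) - 1))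
        MeasureTheory.volume 0 x :=
      intervalIntegral.intervalIntegrable_cpow' (by simpa using hb)
    have hcont : ContinuousOn
        (fun t : ℝ => ((Real.exp (-t) : ℝ) : ℂ) * kummerM a b t * kummerM a' b t)
        (Set.uIcc 0 x) := by
      have : Continuous fun t : ℝ => ((Real.exp (-t) : ℝ) : ℂ) * kummerM a b t * kummerM a' b t := by
        have e1 : Continuous fun t : ℝ => ((Real.exp (-t) : ℝ) : ℂ) :=
          Complex.continuous_ofReal.comp (Real.continuous_exp.comp continuous_neg)
        have e2 : Continuous fun t : ℝ => kummerM a b t := by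
          have := (Fk_diff hb a).continuous.comp Complex.continuous_ofReal
          refine this.congr fun s => (kummerM_eq_Fk hb a s).symm
        have e3 : Continuous fun t : ℝ => kummerM a' b t := by
          have := (Fk_diff hb a').continuous.comp Complex.continuous_ofReal
          refine this.congr fun s => (kummerM_eq_Fk hb a' s).symm
        exact (e1.mul e2).mul e3
      exact this.continuousOn
    have hx2 := hcpow.mul_continuousOn hcont
    have heq : h = fun t : ℝ => (t:ℂ) ^ ((b:ℂ) - 1) *
        (((Real.exp (-t) : ℝ) : ℂ) * kummerM a b t * kummerM a' b t) := by
      funext t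
      rw [hh]
      ring
    rw [heq]
    exact hx2
  have hderiv : ∀ t ∈ Set.Ioo 0 x,
      HasDerivWithinAt (Wr a a' b) ((a' - a) * h t) (Set.Ioi t) t := by
    intro t htt
    have hd := (Wr_hasDerivAt hb a a' htt.1).hasDerivWithinAt (s := Set.Ioi t)
    have : (a' - a) * h t = (a' - a) *
        ((t:ℂ) ^ ((b:ℂ) - 1) * Complex.exp (-(t:ℂ)) * Fk a b t * Fk a' b t) := by
      rw [hh]
      simp only [kummerM_eq_Fk hb a t, kummerM_eq_Fk hb a' t]
      congr 3
      rw [Complex.ofReal_exp]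
      push_cast
      ring
    rw [this]
    exact hd
  have hWint : IntervalIntegrable (fun t => (a' - a) * h t) MeasureTheory.volume 0 x :=
    hint.const_mul (a' - a)
  have key := intervalIntegral.integral_eq_sub_of_hasDeriv_right_of_le hx.le
    (Wr_continuous hb a a').continuousOn hderiv hWint
  rw [intervalIntegral.integral_const_mul, Wr_zero hb a a', sub_zero] at key
  rw [key, Wr]
  rw [kummerM_eq_Fk hb a x, kummerM_eq_Fk hb a' x,
    (kummerM_hasDerivAt hb a x).deriv, (kummerM_hasDerivAt hb a' x).deriv,
    Complex.ofReal_exp]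
  push_cast
  ring
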